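/- For every integer n ≥ 2 and every matrix C in the hollow symmetric Monge polytope HM_n, there exists a unique family of nonnegative real numbers (λ_{a,b}), indexed by pairs of integers a,b ≥ 1 with a+b ≤ n, such that Σ λ_{a,b} = 1 and C = Σ_{a+b≤n} λ_{a,b} · (1/(2ab)) · NESW(a×b). -/

import Mathlib

open Finset

/-- The Monge property for an `n × n` real matrix (indices are 0-based). -/
def IsMonge {n : ℕ} (C : Matrix (Fin n) (Fin n) ℝ) : Prop :=
  ∀ i I j J : Fin n, i < I → j < J → C i j + C I J ≤ C i J + C I j

/-- The hollow symmetric Monge polytope: symmetric matrices with zero diagonal,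
nonnegative entries summing to 1, and the Monge property. -/
def HM (n : ℕ) : Set (Matrix (Fin n) (Fin n) ℝ) :=
  {C | C.IsSymm ∧ (∀ i, C i i = 0) ∧ (∀ i j, 0 ≤ C i j) ∧
    (∑ i, ∑ j, C i j) = 1 ∧ IsMonge C}

/-- `NESW n a b` is the `n × n` 0/1 matrix whose (1-based) `(k, l)` entry is 1 iff
`(k ≤ a ∧ l > n - b) ∨ (k > n - b ∧ l ≤ a)`. -/
def NESW (n a b : ℕ) : Matrix (Fin n) (Fin n) ℝ :=
  Matrix.of fun k l =>
    if (k.val + 1 ≤ a ∧ n - b < l.val + 1) ∨ (n - b < k.val + 1 ∧ l.val + 1 ≤ a) then 1 else 0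

/-- The index set of pairs `(a, b)` with `a, b ≥ 1` and `a + b ≤ n`. -/
def idx (n : ℕ) : Finset (ℕ × ℕ) :=
  (Finset.range (n + 1) ×ˢ Finset.range (n + 1)).filter
    fun ab => 1 ≤ ab.1 ∧ 1 ≤ ab.2 ∧ ab.1 + ab.2 ≤ n

lemma mem_idx_iff {n : ℕ} {ab : ℕ × ℕ} :
    ab ∈ idx n ↔ 1 ≤ ab.1 ∧ 1 ≤ ab.2 ∧ ab.1 + ab.2 ≤ n := by
  simp only [idx, Finset.mem_filter, Finset.mem_product, Finset.mem_range]
  omega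

noncomputable def eC (n : ℕ) (C : Matrix (Fin n) (Fin n) ℝ) (k l : ℕ) : ℝ :=
  if h : k < l ∧ l < n then C ⟨k, h.1.trans h.2⟩ ⟨l, h.2⟩ else 0

noncomputable def DD (n : ℕ) (C : Matrix (Fin n) (Fin n) ℝ) (ab : ℕ × ℕ) : ℝ :=
  eC n C (ab.1 - 1) (n - ab.2) + eC n C ab.1 (n - ab.2 - 1)
    - eC n C ab.1 (n - ab.2) - eC n C (ab.1 - 1) (n - ab.2 - 1)

lemma eC_pos {n : ℕ} {C : Matrix (Fin n) (Fin n) ℝ} {k l : ℕ} (h1 : k < l) (h2 : l < n) :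
    eC n C k l = C ⟨k, h1.trans h2⟩ ⟨l, h2⟩ := by
  unfold eC; rw [dif_pos ⟨h1, h2⟩]

lemma eC_zero {n : ℕ} {C : Matrix (Fin n) (Fin n) ℝ} {k l : ℕ} (h : ¬(k < l ∧ l < n)) :
    eC n C k l = 0 := dif_neg h

lemma eC_le {n : ℕ} {C : Matrix (Fin n) (Fin n) ℝ} (hdiag : ∀ i, C i i = 0)
    {k l : ℕ} (h1 : k ≤ l) (h2 : l < n) :
    eC n C k l = C ⟨k, lt_of_le_of_lt h1 h2⟩ ⟨l, h2⟩ := by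
  rcases eq_or_lt_of_le h1 with rfl | h
  · rw [eC_zero (by omega), hdiag]
  · exact eC_pos h h2

lemma tele1 (g : ℕ → ℝ) (s : ℕ) : ∀ m : ℕ, s ≤ m →
    ∑ a ∈ Finset.Icc (s+1) m, (g (a-1) - g a) = g s - g m := by
  intro m
  induction m with
  | zero => intro h; interval_cases s; simp
  | succ m ih =>
    intro h
    rcases Nat.lt_or_ge s (m+1) with h' | h'
    · rw [Finset.sum_Icc_succ_top (by omega), ih (by omega)]
      simp only [Nat.add_sub_cancel]
      ring
    · have : s = m + 1 := by omega
      subst this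
      rw [Finset.Icc_eq_empty (by omega)]
      simp

lemma tele2 (g : ℕ → ℝ) (p : ℕ) : ∀ q : ℕ, p ≤ q + 1 →
    ∑ b ∈ Finset.Icc p q, (g b - g (b+1)) = g p - g (q+1) := by
  intro q
  induction q with
  | zero =>
    intro h
    interval_cases p
    · simp
    · simp
  | succ q ih =>
    intro h
    rcases Nat.lt_or_ge p (q+2) with h' | h'
    · rw [Finset.sum_Icc_succ_top (by omega), ih (by omega)]
      ring
    · have : p = q + 2 := by omega
      subst this
      rw [Finset.Icc_eq_empty (by omega)]
      simp

lemma star (n : ℕ) (C : Matrix (Fin n) (Fin n) ℝ) (k l : ℕ) (hkl : k < l) (hln : l < n) :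
    ∑ ab ∈ idx n, DD n C ab * (if k < ab.1 ∧ n - ab.2 ≤ l then (1:ℝ) else 0)
      = eC n C k l := by
  have h1 : ∑ ab ∈ idx n, DD n C ab * (if k < ab.1 ∧ n - ab.2 ≤ l then (1:ℝ) else 0)
      = ∑ b ∈ Finset.range (n+1), ∑ a ∈ Finset.range (n+1),
          (if b ∈ Finset.Icc (n-l) (n-k-1) ∧ a ∈ Finset.Icc (k+1) (n-b)
            then DD n C (a,b) else 0) := by
    rw [idx, Finset.sum_filter, Finset.sum_product, Finset.sum_comm]
    refine Finset.sum_congr rfl fun b hb => Finset.sum_congr rfl fun a ha => ?_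
    simp only [Finset.mem_range] at ha hb
    simp only [Finset.mem_Icc]
    split_ifs <;> first | (exfalso; omega) | ring
  rw [h1]
  have h2 : ∀ b ∈ Finset.range (n+1),
      (∑ a ∈ Finset.range (n+1), if b ∈ Finset.Icc (n-l) (n-k-1) ∧ a ∈ Finset.Icc (k+1) (n-b)
          then DD n C (a,b) else 0)
      = (if b ∈ Finset.Icc (n-l) (n-k-1)
          then (eC n C k (n-b) - eC n C k (n-(b+1))) else 0) := by
    intro b hb
    by_cases hbI : b ∈ Finset.Icc (n-l) (n-k-1)
    · rw [if_pos hbI]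
      simp only [hbI, true_and]
      rw [Finset.sum_ite_mem, Finset.inter_eq_right.mpr (by
        intro a ha
        simp only [Finset.mem_Icc] at ha
        simp only [Finset.mem_range]
        have : n - b ≤ n := Nat.sub_le _ _
        omega)]
      simp only [Finset.mem_Icc] at hbI
      have hkb : k ≤ n - b := by omega
      have T1 : ∑ a ∈ Finset.Icc (k+1) (n-b), (eC n C (a-1) (n-b) - eC n C a (n-b))
          = eC n C k (n-b) - eC n C (n-b) (n-b) :=
        tele1 (fun t => eC n C t (n-b)) k (n-b) hkb
      have T2 : ∑ a ∈ Finset.Icc (k+1) (n-b), (eC n C (a-1) (n-b-1) - eC n C a (n-b-1))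
          = eC n C k (n-b-1) - eC n C (n-b) (n-b-1) :=
        tele1 (fun t => eC n C t (n-b-1)) k (n-b) hkb
      calc ∑ a ∈ Finset.Icc (k+1) (n-b), DD n C (a, b)
          = ∑ a ∈ Finset.Icc (k+1) (n-b),
            ((eC n C (a-1) (n-b) - eC n C a (n-b))
              - (eC n C (a-1) (n-b-1) - eC n C a (n-b-1))) := by
            refine Finset.sum_congr rfl fun a _ => ?_
            unfold DD
            dsimp only
            ring
        _ = (eC n C k (n-b) - eC n C (n-b) (n-b))
              - (eC n C k (n-b-1) - eC n C (n-b) (n-b-1)) := by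
            rw [Finset.sum_sub_distrib, T1, T2]
        _ = eC n C k (n-b) - eC n C k (n-(b+1)) := by
            rw [eC_zero (n := n) (C := C) (k := n-b) (l := n-b) (by omega),
              eC_zero (n := n) (C := C) (k := n-b) (l := n-b-1) (by omega)]
            have : n - b - 1 = n - (b+1) := by omega
            rw [this]
            ring
    · rw [if_neg hbI]
      exact Finset.sum_eq_zero fun a _ => if_neg (by tauto)
  rw [Finset.sum_congr rfl h2, Finset.sum_ite_mem, Finset.inter_eq_right.mpr (by
    intro b hbI
    simp only [Finset.mem_Icc] at hbI
    simp only [Finset.mem_range]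
    have h1 : n - k - 1 ≤ n := by omega
    omega)]
  have T3 : ∑ b ∈ Finset.Icc (n-l) (n-k-1), (eC n C k (n-b) - eC n C k (n-(b+1)))
      = eC n C k (n-(n-l)) - eC n C k (n-(n-k-1+1)) :=
    tele2 (fun b => eC n C k (n-b)) (n-l) (n-k-1) (show n - l ≤ n - k - 1 + 1 by omega)
  rw [T3]
  have e1 : n - (n-l) = l := by omega
  have e2 : n - (n-k-1+1) = k := by omega
  rw [e1, e2, eC_zero (n := n) (C := C) (k := k) (l := k) (by omega)]
  ring

lemma DD_nonneg {n : ℕ} {C : Matrix (Fin n) (Fin n) ℝ} (hC : C ∈ HM n)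
    {ab : ℕ × ℕ} (hab : ab ∈ idx n) : 0 ≤ DD n C ab := by
  obtain ⟨hsymm, hdiag, hpos, hsum, hmonge⟩ := hC
  obtain ⟨a, b⟩ := ab
  rw [mem_idx_iff] at hab
  obtain ⟨ha, hb, habn⟩ := hab
  unfold DD
  dsimp only
  rcases eq_or_lt_of_le habn with heq | hlt
  · -- a + b = n : only the first term survives
    rw [eC_le hdiag (k := a-1) (l := n-b) (by omega) (by omega),
      eC_zero (n := n) (C := C) (k := a) (l := n-b-1) (by omega),
      eC_zero (n := n) (C := C) (k := a) (l := n-b) (by omega),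
      eC_zero (n := n) (C := C) (k := a-1) (l := n-b-1) (by omega)]
    have := hpos ⟨a-1, by omega⟩ ⟨n-b, by omega⟩
    linarith
  · -- a + b < n : Monge inequality
    rw [eC_le hdiag (k := a-1) (l := n-b) (by omega) (by omega),
      eC_le hdiag (k := a) (l := n-b-1) (by omega) (by omega),
      eC_le hdiag (k := a) (l := n-b) (by omega) (by omega),
      eC_le hdiag (k := a-1) (l := n-b-1) (by omega) (by omega)]
    have := hmonge ⟨a-1, by omega⟩ ⟨a, by omega⟩ ⟨n-b-1, by omega⟩ ⟨n-b, by omega⟩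
      (by simp only [Fin.mk_lt_mk]; omega) (by simp only [Fin.mk_lt_mk]; omega)
    linarith

lemma star_fin {n : ℕ} {C : Matrix (Fin n) (Fin n) ℝ} (hC : C ∈ HM n) (k l : Fin n) :
    ∑ ab ∈ idx n, DD n C ab * NESW n ab.1 ab.2 k l = C k l := by
  obtain ⟨hsymm, hdiag, hpos, hsum, hmonge⟩ := hC
  have key : ∀ k l : Fin n, k.val < l.val →
      ∑ ab ∈ idx n, DD n C ab * NESW n ab.1 ab.2 k l = C k l := by
    intro k l hkl
    have : ∀ ab ∈ idx n, DD n C ab * NESW n ab.1 ab.2 k l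
        = DD n C ab * (if k.val < ab.1 ∧ n - ab.2 ≤ l.val then (1:ℝ) else 0) := by
      intro ab hab
      rw [mem_idx_iff] at hab
      congr 1
      simp only [NESW, Matrix.of_apply]
      split_ifs <;> first | (exfalso; omega) | rfl
    rw [Finset.sum_congr rfl this, star n C k.val l.val hkl l.isLt,
      eC_pos hkl l.isLt]
  rcases lt_trichotomy k.val l.val with h | h | h
  · exact key k l h
  · have hkl : k = l := Fin.ext h
    subst hkl
    rw [hdiag]
    apply Finset.sum_eq_zero
    intro ab hab
    rw [mem_idx_iff] at hab
    have : NESW n ab.1 ab.2 k k = 0 := by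
      simp only [NESW, Matrix.of_apply]
      rw [if_neg]
      omega
    rw [this, mul_zero]
  · have hsym' : C k l = C l k := hsymm.apply l k
    rw [hsym', ← key l k h]
    refine Finset.sum_congr rfl fun ab hab => ?_
    rw [mem_idx_iff] at hab
    congr 1
    simp only [NESW, Matrix.of_apply]
    split_ifs <;> first | (exfalso; omega) | rfl

lemma count_lt {n a : ℕ} (ha : a ≤ n) :
    ∑ i : Fin n, (if i.val < a then (1:ℝ) else 0) = a := by
  rw [Fin.sum_univ_eq_sum_range (fun m => if m < a then (1:ℝ) else 0) n]
  rw [Finset.sum_boole]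
  have : (Finset.range n).filter (fun m => m < a) = Finset.range a := by
    ext m
    simp only [Finset.mem_filter, Finset.mem_range]
    omega
  rw [this, Finset.card_range]

lemma count_ge {n b : ℕ} (hb : b ≤ n) :
    ∑ i : Fin n, (if n - b ≤ i.val then (1:ℝ) else 0) = b := by
  rw [Fin.sum_univ_eq_sum_range (fun m => if n - b ≤ m then (1:ℝ) else 0) n]
  rw [Finset.sum_boole]
  have : (Finset.range n).filter (fun m => n - b ≤ m) = Finset.Ico (n-b) n := by
    ext m
    simp only [Finset.mem_filter, Finset.mem_range, Finset.mem_Ico]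
    omega
  rw [this, Nat.card_Ico]
  have : n - (n - b) = b := by omega
  rw [this]

lemma nesw_sum {n a b : ℕ} (ha : 1 ≤ a) (hb : 1 ≤ b) (hab : a + b ≤ n) :
    ∑ k : Fin n, ∑ l : Fin n, NESW n a b k l = 2 * a * b := by
  have hsplit : ∀ k l : Fin n, NESW n a b k l
      = (if k.val < a then (1:ℝ) else 0) * (if n - b ≤ l.val then (1:ℝ) else 0)
        + (if n - b ≤ k.val then (1:ℝ) else 0) * (if l.val < a then (1:ℝ) else 0) := by
    intro k l
    simp only [NESW, Matrix.of_apply]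
    split_ifs <;> first | (exfalso; omega) | norm_num
  calc ∑ k : Fin n, ∑ l : Fin n, NESW n a b k l
      = ∑ k : Fin n, ∑ l : Fin n,
        ((if k.val < a then (1:ℝ) else 0) * (if n - b ≤ l.val then (1:ℝ) else 0)
        + (if n - b ≤ k.val then (1:ℝ) else 0) * (if l.val < a then (1:ℝ) else 0)) :=
        Finset.sum_congr rfl fun k _ => Finset.sum_congr rfl fun l _ => hsplit k l
    _ = (∑ k : Fin n, (if k.val < a then (1:ℝ) else 0))
          * (∑ l : Fin n, (if n - b ≤ l.val then (1:ℝ) else 0))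
        + (∑ k : Fin n, (if n - b ≤ k.val then (1:ℝ) else 0))
          * (∑ l : Fin n, (if l.val < a then (1:ℝ) else 0)) := by
        rw [Finset.sum_mul_sum, Finset.sum_mul_sum, ← Finset.sum_add_distrib]
        exact Finset.sum_congr rfl fun k _ => Finset.sum_add_distrib
    _ = 2 * a * b := by
        rw [count_lt (show a ≤ n by omega), count_ge (show b ≤ n by omega)]
        ring

lemma rep_entry {n : ℕ} {C : Matrix (Fin n) (Fin n) ℝ} {lam' : ℕ × ℕ → ℝ}
    (heq : C = ∑ ab ∈ idx n,
      lam' ab • ((1 / (2 * (ab.1 : ℝ) * (ab.2 : ℝ))) • NESW n ab.1 ab.2))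
    (k l : ℕ) :
    eC n C k l = ∑ p ∈ idx n, (lam' p / (2 * (p.1 : ℝ) * (p.2 : ℝ))) *
      (if k < l ∧ l < n ∧ k < p.1 ∧ n - p.2 ≤ l then (1:ℝ) else 0) := by
  by_cases h : k < l ∧ l < n
  · rw [eC_pos h.1 h.2, heq, Matrix.sum_apply]
    refine Finset.sum_congr rfl fun p hp => ?_
    rw [mem_idx_iff] at hp
    simp only [Matrix.smul_apply, smul_eq_mul, NESW, Matrix.of_apply]
    split_ifs <;> first | (exfalso; omega) | ring
  · rw [eC_zero h]
    symm
    refine Finset.sum_eq_zero fun p hp => ?_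
    rw [if_neg (by tauto), mul_zero]


/-- Every matrix in the hollow symmetric Monge polytope is a *unique* convex combination
of the matrices `(1/(2ab)) • NESW (a × b)` for `a, b ≥ 1` with `a + b ≤ n`. -/
theorem hm_unique_convex_combination (n : ℕ) (hn : 2 ≤ n)
    (C : Matrix (Fin n) (Fin n) ℝ) (hC : C ∈ HM n) :
    ∃! lam : ℕ × ℕ → ℝ,
      (∀ ab, 0 ≤ lam ab) ∧ (∀ ab ∉ idx n, lam ab = 0) ∧
      (∑ ab ∈ idx n, lam ab) = 1 ∧
      C = ∑ ab ∈ idx n,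
        lam ab • ((1 / (2 * (ab.1 : ℝ) * (ab.2 : ℝ))) • NESW n ab.1 ab.2) := by
  classical
  obtain ⟨hsymm, hdiag, hpos, hsum, hmonge⟩ := id hC
  refine ⟨fun ab => if ab ∈ idx n then (2 * ab.1 * ab.2 : ℝ) * DD n C ab else 0,
    ⟨?_, ?_, ?_, ?_⟩, ?_⟩
  · -- nonneg
    intro ab
    dsimp only
    by_cases h : ab ∈ idx n
    · rw [if_pos h]
      have := DD_nonneg hC h
      have h1 : (0:ℝ) ≤ 2 * ab.1 * ab.2 := by positivity
      exact mul_nonneg h1 this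
    · rw [if_neg h]
  · -- support
    intro ab h
    dsimp only
    rw [if_neg h]
  · -- sum = 1
    dsimp only
    have hsum1 : ∑ ab ∈ idx n, DD n C ab * (2 * ab.1 * ab.2 : ℝ) = 1 := by
      calc ∑ ab ∈ idx n, DD n C ab * (2 * ab.1 * ab.2 : ℝ)
          = ∑ ab ∈ idx n, DD n C ab * (∑ k : Fin n, ∑ l : Fin n, NESW n ab.1 ab.2 k l) := by
            refine Finset.sum_congr rfl fun ab hab => ?_
            rw [mem_idx_iff] at hab
            rw [nesw_sum hab.1 hab.2.1 hab.2.2]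
        _ = ∑ ab ∈ idx n, ∑ k : Fin n, ∑ l : Fin n, DD n C ab * NESW n ab.1 ab.2 k l := by
            refine Finset.sum_congr rfl fun ab _ => ?_
            rw [Finset.mul_sum]
            exact Finset.sum_congr rfl fun k _ => Finset.mul_sum _ _ _
        _ = ∑ k : Fin n, ∑ l : Fin n, ∑ ab ∈ idx n, DD n C ab * NESW n ab.1 ab.2 k l := by
            rw [Finset.sum_comm]
            exact Finset.sum_congr rfl fun k _ => Finset.sum_comm
        _ = ∑ k : Fin n, ∑ l : Fin n, C k l := by
            exact Finset.sum_congr rfl fun k _ => Finset.sum_congr rfl fun l _ => star_fin hC k l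
        _ = 1 := hsum
    rw [← hsum1]
    refine Finset.sum_congr rfl fun ab hab => ?_
    rw [if_pos hab]
    ring
  · -- representation
    apply Matrix.ext
    intro k l
    rw [Matrix.sum_apply]
    have hterm : ∀ ab ∈ idx n,
        ((fun ab => if ab ∈ idx n then (2 * ab.1 * ab.2 : ℝ) * DD n C ab else 0) ab
          • ((1 / (2 * (ab.1 : ℝ) * (ab.2 : ℝ))) • NESW n ab.1 ab.2)) k l
        = DD n C ab * NESW n ab.1 ab.2 k l := by
      intro ab hab
      have hmem := mem_idx_iff.mp hab
      have ha : ((ab.1 : ℝ)) ≠ 0 := Nat.cast_ne_zero.mpr (by omega)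
      have hb : ((ab.2 : ℝ)) ≠ 0 := Nat.cast_ne_zero.mpr (by omega)
      simp only [Matrix.smul_apply, smul_eq_mul, if_pos hab]
      field_simp
    rw [Finset.sum_congr rfl hterm, star_fin hC k l]
  · -- uniqueness
    rintro lam' ⟨h0', hsupp', hsum', heq'⟩
    funext ab
    by_cases hab : ab ∈ idx n
    · obtain ⟨a, b⟩ := ab
      obtain ⟨ha, hb, habn⟩ := mem_idx_iff.mp hab
      have hE := rep_entry heq'
      have hW : DD n C (a, b) = lam' (a, b) / (2 * (a:ℝ) * (b:ℝ)) := by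
        have expand : DD n C (a, b) = ∑ p ∈ idx n, (lam' p / (2 * (p.1 : ℝ) * (p.2 : ℝ))) *
            ((if a-1 < n-b ∧ n-b < n ∧ a-1 < p.1 ∧ n - p.2 ≤ n-b then (1:ℝ) else 0)
             + (if a < n-b-1 ∧ n-b-1 < n ∧ a < p.1 ∧ n - p.2 ≤ n-b-1 then (1:ℝ) else 0)
             - (if a < n-b ∧ n-b < n ∧ a < p.1 ∧ n - p.2 ≤ n-b then (1:ℝ) else 0)
             - (if a-1 < n-b-1 ∧ n-b-1 < n ∧ a-1 < p.1 ∧ n - p.2 ≤ n-b-1 then (1:ℝ) else 0)) := by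
          unfold DD
          dsimp only
          rw [hE (a-1) (n-b), hE a (n-b-1), hE a (n-b), hE (a-1) (n-b-1),
            ← Finset.sum_add_distrib, ← Finset.sum_sub_distrib, ← Finset.sum_sub_distrib]
          exact Finset.sum_congr rfl fun p _ => by ring
        rw [expand]
        have key : ∀ p ∈ idx n, (lam' p / (2 * (p.1 : ℝ) * (p.2 : ℝ))) *
            ((if a-1 < n-b ∧ n-b < n ∧ a-1 < p.1 ∧ n - p.2 ≤ n-b then (1:ℝ) else 0)
             + (if a < n-b-1 ∧ n-b-1 < n ∧ a < p.1 ∧ n - p.2 ≤ n-b-1 then (1:ℝ) else 0)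
             - (if a < n-b ∧ n-b < n ∧ a < p.1 ∧ n - p.2 ≤ n-b then (1:ℝ) else 0)
             - (if a-1 < n-b-1 ∧ n-b-1 < n ∧ a-1 < p.1 ∧ n - p.2 ≤ n-b-1 then (1:ℝ) else 0))
            = (if p = (a, b) then lam' (a, b) / (2 * (a:ℝ) * (b:ℝ)) else 0) := by
          intro p hp
          obtain ⟨a', b'⟩ := p
          obtain ⟨ha', hb', habn'⟩ := mem_idx_iff.mp hp
          by_cases hpq : (a', b') = (a, b)
          · rw [if_pos hpq]
            rw [Prod.mk.injEq] at hpq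
            obtain ⟨rfl, rfl⟩ := hpq
            rw [if_pos (by omega), if_neg (by omega), if_neg (by omega), if_neg (by omega)]
            dsimp only
            ring
          · rw [if_neg hpq]
            rw [Prod.mk.injEq] at hpq
            dsimp only
            split_ifs <;> first | (exfalso; omega) | ring
        rw [Finset.sum_congr rfl key, Finset.sum_ite_eq' (idx n) (a, b)
          (fun _ => lam' (a, b) / (2 * (a:ℝ) * (b:ℝ))), if_pos hab]
      have ha' : ((a : ℝ)) ≠ 0 := Nat.cast_ne_zero.mpr (by omega)
      have hb' : ((b : ℝ)) ≠ 0 := Nat.cast_ne_zero.mpr (by omega)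
      dsimp only
      rw [if_pos hab, hW]
      field_simp
    · rw [hsupp' ab hab, if_neg hab]
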